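/- Let ψ : ℝ → ℝ be continuous with ∫_ℝ ψ(x) dx = 0 and such that for every N ∈ ℕ there is C_N > 0 with |ψ(x)| ≤ C_N(1+|x|)^{−N} for all x. Let f : ℝ → ℝ be bounded and measurable, let ω be a regular modulus of continuity, and let t ∈ ℝ be such that limsup_{s→t} |f(s)−f(t)| / ω(|s−t|) < ∞. Define the wavelet coefficients c_{j,k} = 2^j ∫_ℝ f(x) ψ(2^j x − k) dx. Then limsup_{j→∞} |c_{j,k_j(t)}| / ω(2^{−j}) < ∞, where k_j(t) = ⌊2^j t⌋. -/

import Mathlib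

open MeasureTheory Filter

def IsModulusOfContinuity (w : ℝ → ℝ) : Prop :=
  (∀ x : ℝ, 0 ≤ x → 0 ≤ w x) ∧ MonotoneOn w (Set.Ici (0 : ℝ)) ∧ w 0 = 0 ∧
    ∃ C : ℝ, 0 < C ∧ ∀ x : ℝ, 0 ≤ x → w (2 * x) ≤ C * w x

def IsRegularModulus (w : ℝ → ℝ) : Prop :=
  IsModulusOfContinuity w ∧ ∃ N : ℕ, ∃ C : ℝ, 0 < C ∧ ∀ J : ℕ,
    ((∑' j : ℕ, (2 : ℝ) ^ ((N : ℤ) * ((J : ℤ) + (j : ℤ))) * w ((2 : ℝ) ^ (-((J : ℤ) + (j : ℤ)))))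
      ≤ C * (2 : ℝ) ^ ((N : ℤ) * (J : ℤ)) * w ((2 : ℝ) ^ (-(J : ℤ)))) ∧
    ((∑' i : ℕ, (2 : ℝ) ^ (((N : ℤ) + 1) * ((J : ℤ) - (i : ℤ))) * w ((2 : ℝ) ^ (-((J : ℤ) - (i : ℤ)))))
      ≤ C * (2 : ℝ) ^ (((N : ℤ) + 1) * (J : ℤ)) * w ((2 : ℝ) ^ (-(J : ℤ))))

set_option maxHeartbeats 2000000 in
theorem stmt_13 (ψ : ℝ → ℝ) (hψc : Continuous ψ)
    (hψdecay : ∀ N : ℕ, ∃ C : ℝ, 0 < C ∧ ∀ x : ℝ, |ψ x| ≤ C * (1 + |x|) ^ (-(N : ℤ)))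
    (hψint : ∫ x : ℝ, ψ x = 0)
    (f : ℝ → ℝ) (hfm : Measurable f) (hfb : ∃ M : ℝ, ∀ x : ℝ, |f x| ≤ M)
    (w : ℝ → ℝ) (hw : IsRegularModulus w)
    (t : ℝ)
    (hreg : Filter.limsup (fun s => ENNReal.ofReal (|f s - f t| / w |s - t|))
      (nhdsWithin t {t}ᶜ) < ⊤) :
    Filter.limsup (fun j : ℕ => ENNReal.ofReal
      (|(2 : ℝ) ^ j * ∫ x : ℝ, f x * ψ ((2 : ℝ) ^ j * x - (⌊(2 : ℝ) ^ j * t⌋ : ℝ))| /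
        w ((2 : ℝ) ^ (-(j : ℤ))))) Filter.atTop < ⊤ := by
  obtain ⟨⟨hw0, hwmono, hw00, C0, hC0, hdbl0⟩, -⟩ := hw
  -- trivial case: w vanishes on [0,1]
  rcases eq_or_lt_of_le (hw0 1 zero_le_one) with h10 | hw1pos
  · have hz : ∀ j : ℕ, w ((2 : ℝ) ^ (-(j : ℤ))) = 0 := by
      intro j
      refine le_antisymm ?_ (hw0 _ (by positivity))
      rw [h10]
      refine hwmono (Set.mem_Ici.2 (by positivity)) (Set.mem_Ici.2 zero_le_one) ?_
      rw [zpow_neg, zpow_natCast]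
      rw [inv_le_one_iff₀]
      right; exact one_le_pow₀ one_le_two
    have heq : (fun j : ℕ => ENNReal.ofReal
        (|(2 : ℝ) ^ j * ∫ x : ℝ, f x * ψ ((2 : ℝ) ^ j * x - (⌊(2 : ℝ) ^ j * t⌋ : ℝ))| /
          w ((2 : ℝ) ^ (-(j : ℤ))))) = fun _ => (0 : ENNReal) := by
      funext j; rw [hz j, div_zero, ENNReal.ofReal_zero]
    rw [heq, limsup_const]
    exact lt_top_iff_ne_top.2 (by simp)
  -- main case : 0 < w 1
  set C : ℝ := max C0 1 with hCdef
  have hC1 : 1 ≤ C := le_max_right _ _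
  have hCpos : 0 < C := lt_of_lt_of_le one_pos hC1
  have hdbl : ∀ x : ℝ, 0 ≤ x → w (2 * x) ≤ C * w x := fun x hx =>
    (hdbl0 x hx).trans (mul_le_mul_of_nonneg_right (le_max_left _ _) (hw0 x hx))
  have hiter : ∀ (m : ℕ) (x : ℝ), 0 ≤ x → w (2 ^ m * x) ≤ C ^ m * w x := by
    intro m
    induction m with
    | zero => intro x hx; simp
    | succ m ih =>
      intro x hx
      have h1 : (2:ℝ) ^ (m+1) * x = 2 ^ m * (2 * x) := by ring
      have h2 : w ((2:ℝ) ^ m * (2 * x)) ≤ C ^ m * w (2 * x) := ih _ (by positivity)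
      have h3 : w (2 * x) ≤ C * w x := hdbl x hx
      calc w ((2:ℝ) ^ (m+1) * x) = w ((2:ℝ) ^ m * (2 * x)) := by rw [h1]
        _ ≤ C ^ m * w (2*x) := h2
        _ ≤ C ^ m * (C * w x) := mul_le_mul_of_nonneg_left h3 (by positivity)
        _ = C ^ (m+1) * w x := by ring
  have hone : ∀ j : ℕ, (2:ℝ) ^ j * (2:ℝ) ^ (-(j:ℤ)) = 1 := by
    intro j
    rw [← zpow_natCast (2:ℝ) j, ← zpow_add₀ (two_ne_zero), add_neg_cancel, zpow_zero]
  have hpos : ∀ j : ℕ, 0 < w ((2:ℝ) ^ (-(j:ℤ))) := by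
    intro j
    have h1 := hiter j ((2:ℝ) ^ (-(j:ℤ))) (by positivity)
    rw [hone j] at h1
    nlinarith [pow_pos hCpos j, hw0 ((2:ℝ) ^ (-(j:ℤ))) (by positivity)]
  have hxpos : ∀ x : ℝ, 0 < x → 0 < w x := by
    intro x hx
    obtain ⟨n, hn⟩ := exists_pow_lt_of_lt_one hx (by norm_num : (2:ℝ)⁻¹ < 1)
    have h2 : ((2:ℝ)⁻¹) ^ n = (2:ℝ) ^ (-(n:ℤ)) := by
      rw [inv_pow, ← zpow_natCast (2:ℝ) n, ← zpow_neg]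
    refine lt_of_lt_of_le (hpos n) (hwmono (Set.mem_Ici.2 (by positivity)) (Set.mem_Ici.2 hx.le) ?_)
    rw [← h2]; exact hn.le
  obtain ⟨a, haC⟩ := pow_unbounded_of_one_lt C (one_lt_two (α := ℝ))
  have haC' : C ≤ (2:ℝ) ^ a := haC.le
  obtain ⟨M, hM⟩ := hfb
  set M' : ℝ := M + |f t| with hM'def
  have hM' : ∀ x : ℝ, |f x - f t| ≤ M' := fun x =>
    (abs_sub (f x) (f t)).trans (add_le_add_left (hM x) _)
  have hM'0 : 0 ≤ M' := (abs_nonneg (f t - f t)).trans (hM' t)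
  obtain ⟨Cψ, hCψpos, hCψ⟩ := hψdecay (a + 2)
  have hψ2 : ∀ x : ℝ, |ψ x| ≤ Cψ * (1 + x ^ 2)⁻¹ := by
    intro x
    refine (hCψ x).trans ?_
    have h1 : (1:ℝ) ≤ 1 + |x| := le_add_of_nonneg_right (abs_nonneg x)
    have h2 : (1 + |x|) ^ (-((a+2:ℕ):ℤ)) = ((1 + |x|) ^ (a+2))⁻¹ := by
      rw [← zpow_natCast (1 + |x|) (a+2), ← zpow_neg]
    rw [h2]
    refine mul_le_mul_of_nonneg_left ?_ hCψpos.le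
    refine inv_anti₀ (by positivity) ?_
    have h3 : (1 + |x|) ^ 2 ≤ (1 + |x|) ^ (a + 2) := pow_le_pow_right₀ h1 (by omega)
    nlinarith [sq_abs x, abs_nonneg x]
  have hψInt : Integrable ψ := by
    refine (integrable_inv_one_add_sq.const_mul Cψ).mono' hψc.aestronglyMeasurable ?_
    exact ae_of_all _ fun x => by rw [Real.norm_eq_abs]; exact hψ2 x
  have hregne : limsup (fun s => ENNReal.ofReal (|f s - f t| / w |s - t|)) (nhdsWithin t {t}ᶜ) ≠ ⊤ :=
    hreg.ne
  have hLtop : limsup (fun s => ENNReal.ofReal (|f s - f t| / w |s - t|)) (nhdsWithin t {t}ᶜ) + 1 ≠ ⊤ :=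
    ENNReal.add_ne_top.2 ⟨hregne, ENNReal.one_ne_top⟩
  have hev : ∀ᶠ s in nhdsWithin t {t}ᶜ, ENNReal.ofReal (|f s - f t| / w |s - t|) <
      limsup (fun s => ENNReal.ofReal (|f s - f t| / w |s - t|)) (nhdsWithin t {t}ᶜ) + 1 :=
    eventually_lt_of_limsup_lt (ENNReal.lt_add_right hregne one_ne_zero)
  set B : ℝ := (limsup (fun s => ENNReal.ofReal (|f s - f t| / w |s - t|)) (nhdsWithin t {t}ᶜ) + 1).toReal
    with hBdef
  have hB0 : 0 ≤ B := ENNReal.toReal_nonneg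
  have hB : ∀ᶠ s in nhdsWithin t {t}ᶜ, |f s - f t| ≤ B * w |s - t| := by
    filter_upwards [hev, self_mem_nhdsWithin] with s hs hs'
    have hst : s ≠ t := hs'
    have habs : 0 < |s - t| := abs_pos.2 (sub_ne_zero.2 hst)
    have hwpos : 0 < w |s - t| := hxpos _ habs
    have h1 : |f s - f t| / w |s - t| ≤ B := (ENNReal.ofReal_le_iff_le_toReal hLtop).1 hs.le
    calc |f s - f t| = (|f s - f t| / w |s - t|) * w |s - t| :=
      (div_mul_cancel₀ _ hwpos.ne').symm
      _ ≤ B * w |s - t| := mul_le_mul_of_nonneg_right h1 hwpos.le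
  rw [eventually_nhdsWithin_iff, Metric.eventually_nhds_iff] at hB
  obtain ⟨δ, hδpos, hδ⟩ := hB
  set B₀ : ℝ := B * 4 ^ a + M' / (δ ^ a * w 1) with hB₀def
  have hB₀0 : 0 ≤ B₀ :=
    add_nonneg (mul_nonneg hB0 (by positivity))
      (div_nonneg hM'0 (mul_nonneg (pow_nonneg hδpos.le a) (hw0 1 zero_le_one)))
  have hBB : B * 4 ^ a ≤ B₀ :=
    le_add_of_nonneg_right (div_nonneg hM'0
      (mul_nonneg (pow_nonneg hδpos.le a) (hw0 1 zero_le_one)))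
  have hBM : M' / (δ ^ a * w 1) ≤ B₀ := le_add_of_nonneg_left (mul_nonneg hB0 (by positivity))
  clear_value C M' B B₀
  -- key pointwise estimate
  have key : ∀ (j : ℕ) (x : ℝ),
      |f x - f t| ≤ B₀ * (1 + |(2:ℝ) ^ j * x - (⌊(2:ℝ) ^ j * t⌋ : ℝ)|) ^ a *
        w ((2:ℝ) ^ (-(j:ℤ))) := by
    intro j x
    set s : ℝ := (2:ℝ) ^ j with hsdef
    have hs1 : (1:ℝ) ≤ s := one_le_pow₀ one_le_two
    have hspos : (0:ℝ) < s := lt_of_lt_of_le one_pos hs1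
    set k : ℝ := ((⌊s * t⌋ : ℤ) : ℝ) with hkdef
    set u : ℝ := |s * x - k| with hudef
    have hu0 : 0 ≤ u := hudef ▸ abs_nonneg _
    have h1u : (0:ℝ) < 1 + u := by linarith
    clear_value u k s
    have hwj0 : 0 ≤ w ((2:ℝ) ^ (-(j:ℤ))) := (hpos j).le
    have hsinv : s⁻¹ = (2:ℝ) ^ (-(j:ℤ)) := by
      rw [hsdef, ← zpow_natCast (2:ℝ) j, ← zpow_neg]
    have hsu : s * |x - t| ≤ 1 + u := by
      have hk1 : |s * t - k| ≤ 1 := by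
        rw [abs_le]
        constructor
        · linarith [Int.floor_le (s * t)]
        · linarith [Int.lt_floor_add_one (s * t)]
      have h1 : |s * x - s * t| = s * |x - t| := by
        rw [← mul_sub, abs_mul, abs_of_pos hspos]
      have h2 : |s * x - s * t| ≤ u + 1 := by
        calc |s * x - s * t| = |(s * x - k) - (s * t - k)| := by ring_nf
          _ ≤ |s * x - k| + |s * t - k| := abs_sub _ _
          _ ≤ u + 1 := by linarith [hk1]
      linarith [h1.symm.le.trans h2]
    have hxt : |x - t| ≤ (2:ℝ) ^ (-(j:ℤ)) * (1 + u) := by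
      rw [← hsinv]
      rw [← mul_le_mul_iff_right₀ hspos]
      have h3 : s * (s⁻¹ * (1 + u)) = 1 + u := by
        rw [← mul_assoc, mul_inv_cancel₀ hspos.ne', one_mul]
      rw [h3]; exact hsu
    rcases lt_or_ge (dist x t) δ with hcase | hcase
    · rcases eq_or_ne x t with rfl | hxt'
      · have h0 : |f x - f x| = 0 := by simp
        rw [h0]
        exact mul_nonneg (mul_nonneg hB₀0 (pow_nonneg h1u.le a)) hwj0
      · have hfx : |f x - f t| ≤ B * w |x - t| := hδ hcase hxt'
        obtain ⟨m, hnm, hm4⟩ : ∃ m : ℕ, (1 + u) ≤ (2:ℝ) ^ m ∧ ((2:ℝ) ^ m) ≤ 4 * (1 + u) := by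
          have hn0 : 0 < ⌈1 + u⌉₊ := Nat.ceil_pos.2 h1u
          refine ⟨Nat.log 2 ⌈1 + u⌉₊ + 1, ?_, ?_⟩
          · have h1 : ⌈1 + u⌉₊ < 2 ^ (Nat.log 2 ⌈1 + u⌉₊ + 1) :=
              Nat.lt_pow_succ_log_self (by norm_num) _
            have h2 : ((⌈1 + u⌉₊ : ℝ)) < (2:ℝ) ^ (Nat.log 2 ⌈1 + u⌉₊ + 1) := by exact_mod_cast h1
            linarith [Nat.le_ceil (1 + u)]
          · have h1 : (2:ℕ) ^ (Nat.log 2 ⌈1 + u⌉₊) ≤ ⌈1 + u⌉₊ := Nat.pow_log_le_self 2 hn0.ne'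
            have h2 : ((2:ℝ)) ^ (Nat.log 2 ⌈1 + u⌉₊) ≤ ((⌈1 + u⌉₊ : ℕ) : ℝ) := by exact_mod_cast h1
            have h3 : ((⌈1 + u⌉₊ : ℕ) : ℝ) < (1 + u) + 1 := Nat.ceil_lt_add_one h1u.le
            have h4 : (2:ℝ) ^ (Nat.log 2 ⌈1 + u⌉₊ + 1) = 2 * (2:ℝ) ^ (Nat.log 2 ⌈1 + u⌉₊) := by
              rw [pow_succ]; ring
            nlinarith
        have hchain : w |x - t| ≤ 4 ^ a * (1 + u) ^ a * w ((2:ℝ) ^ (-(j:ℤ))) := by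
          have hzj : (0:ℝ) < (2:ℝ) ^ (-(j:ℤ)) := by positivity
          have h1 : w |x - t| ≤ w ((2:ℝ) ^ (-(j:ℤ)) * (1 + u)) :=
            hwmono (Set.mem_Ici.2 (abs_nonneg _)) (Set.mem_Ici.2 (mul_nonneg hzj.le h1u.le)) hxt
          have h2 : w ((2:ℝ) ^ (-(j:ℤ)) * (1 + u)) ≤ w ((2:ℝ) ^ m * (2:ℝ) ^ (-(j:ℤ))) := by
            refine hwmono (Set.mem_Ici.2 (mul_nonneg hzj.le h1u.le))
              (Set.mem_Ici.2 (by positivity)) ?_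
            nlinarith [hnm, hzj]
          have h3 : w ((2:ℝ) ^ m * (2:ℝ) ^ (-(j:ℤ))) ≤ C ^ m * w ((2:ℝ) ^ (-(j:ℤ))) :=
            hiter m _ (by positivity)
          have h4 : C ^ m ≤ ((2:ℝ) ^ m) ^ a := by
            calc C ^ m ≤ ((2:ℝ) ^ a) ^ m := pow_le_pow_left₀ hCpos.le haC' m
              _ = ((2:ℝ) ^ m) ^ a := by rw [← pow_mul, ← pow_mul, mul_comm]
          have h5 : ((2:ℝ) ^ m) ^ a ≤ (4 * (1 + u)) ^ a := pow_le_pow_left₀ (by positivity) hm4 a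
          have hua : (0:ℝ) ≤ (1 + u) ^ a := pow_nonneg h1u.le a
          have h6 : (4 * (1 + u)) ^ a = 4 ^ a * (1 + u) ^ a := mul_pow 4 (1 + u) a
          have h7 : C ^ m * w ((2:ℝ) ^ (-(j:ℤ))) ≤
              4 ^ a * (1 + u) ^ a * w ((2:ℝ) ^ (-(j:ℤ))) :=
            mul_le_mul_of_nonneg_right (h6 ▸ (h4.trans h5)) hwj0
          exact le_trans h1 (le_trans h2 (le_trans h3 h7))
        calc |f x - f t| ≤ B * w |x - t| := hfx
          _ ≤ B * (4 ^ a * (1 + u) ^ a * w ((2:ℝ) ^ (-(j:ℤ)))) :=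
            mul_le_mul_of_nonneg_left hchain hB0
          _ = (B * 4 ^ a) * ((1 + u) ^ a * w ((2:ℝ) ^ (-(j:ℤ)))) := by ring
          _ ≤ B₀ * ((1 + u) ^ a * w ((2:ℝ) ^ (-(j:ℤ)))) :=
            mul_le_mul_of_nonneg_right hBB (mul_nonneg (pow_nonneg h1u.le a) hwj0)
          _ = B₀ * (1 + u) ^ a * w ((2:ℝ) ^ (-(j:ℤ))) := by ring
    · have hd : δ ≤ |x - t| := by rw [← Real.dist_eq x t]; exact hcase
      have h3 : s * δ ≤ 1 + u :=
        le_trans (mul_le_mul_of_nonneg_left hd hspos.le) hsu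
      have h4 : (s * δ) ^ a ≤ (1 + u) ^ a := pow_le_pow_left₀ (mul_nonneg hspos.le hδpos.le) h3 a
      have h5 : w 1 ≤ C ^ j * w ((2:ℝ) ^ (-(j:ℤ))) := by
        have h := hiter j ((2:ℝ) ^ (-(j:ℤ))) (by positivity)
        rwa [hone j] at h
      have h6 : (C:ℝ) ^ j ≤ s ^ a := by
        calc C ^ j ≤ ((2:ℝ) ^ a) ^ j := pow_le_pow_left₀ hCpos.le haC' j
          _ = s ^ a := by rw [hsdef, ← pow_mul, ← pow_mul, mul_comm]
      have hstep : δ ^ a * w 1 ≤ (1 + u) ^ a * w ((2:ℝ) ^ (-(j:ℤ))) := by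
        have c1 : δ ^ a * w 1 ≤ δ ^ a * (C ^ j * w ((2:ℝ) ^ (-(j:ℤ)))) :=
          mul_le_mul_of_nonneg_left h5 (by positivity)
        have c3 : C ^ j * (δ ^ a * w ((2:ℝ) ^ (-(j:ℤ)))) ≤
            s ^ a * (δ ^ a * w ((2:ℝ) ^ (-(j:ℤ)))) :=
          mul_le_mul_of_nonneg_right h6 (mul_nonneg (by positivity) hwj0)
        have c4 : s ^ a * (δ ^ a * w ((2:ℝ) ^ (-(j:ℤ)))) = (s * δ) ^ a * w ((2:ℝ) ^ (-(j:ℤ))) := by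
          rw [mul_pow]; ring
        have e1 : (s * δ) ^ a * w ((2:ℝ) ^ (-(j:ℤ))) ≤ (1 + u) ^ a * w ((2:ℝ) ^ (-(j:ℤ))) :=
          mul_le_mul_of_nonneg_right h4 hwj0
        nlinarith [c1, c3, c4, e1]
      have hA : (0:ℝ) < δ ^ a * w 1 := mul_pos (pow_pos hδpos a) hw1pos
      calc |f x - f t| ≤ M' := hM' x
        _ = (M' / (δ ^ a * w 1)) * (δ ^ a * w 1) := (div_mul_cancel₀ M' hA.ne').symm
        _ ≤ (M' / (δ ^ a * w 1)) * ((1 + u) ^ a * w ((2:ℝ) ^ (-(j:ℤ)))) :=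
          mul_le_mul_of_nonneg_left hstep (div_nonneg hM'0 hA.le)
        _ ≤ B₀ * ((1 + u) ^ a * w ((2:ℝ) ^ (-(j:ℤ)))) := by
          exact mul_le_mul_of_nonneg_right hBM (mul_nonneg (pow_nonneg h1u.le a) hwj0)
        _ = B₀ * (1 + u) ^ a * w ((2:ℝ) ^ (-(j:ℤ))) := by ring
  -- per-j integral estimate
  have hkey : ∀ j : ℕ,
      |(2:ℝ) ^ j * ∫ x : ℝ, f x * ψ ((2:ℝ) ^ j * x - (⌊(2:ℝ) ^ j * t⌋ : ℝ))| ≤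
        (B₀ * Cψ * Real.pi) * w ((2:ℝ) ^ (-(j:ℤ))) := by
    intro j
    set s : ℝ := (2:ℝ) ^ j with hsdef
    have hspos : (0:ℝ) < s := by positivity
    have hsne : s ≠ 0 := hspos.ne'
    set k : ℝ := ((⌊s * t⌋ : ℤ) : ℝ) with hkdef
    set wj : ℝ := w ((2:ℝ) ^ (-(j:ℤ))) with hwjdef
    have hwjpos : 0 < wj := hwjdef ▸ hpos j
    have hkey2 : ∀ x : ℝ, |f x - f t| ≤ B₀ * (1 + |s * x - k|) ^ a * wj := fun x => key j x
    clear_value wj k s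
    have hgint : Integrable (fun x => ψ (s * x - k)) := (hψInt.comp_sub_right k).comp_mul_left' hsne
    have hdom : Integrable (fun x : ℝ => (1 + (s * x - k) ^ 2)⁻¹) :=
      (integrable_inv_one_add_sq.comp_sub_right k).comp_mul_left' hsne
    have hfg : Integrable (fun x => f x * ψ (s * x - k)) :=
      hgint.bdd_mul hfm.aestronglyMeasurable (c := M) (ae_of_all _ fun x => by rw [Real.norm_eq_abs]; exact hM x)
    have hzero : (∫ x : ℝ, ψ (s * x - k)) = 0 := by
      have h1 : (∫ x : ℝ, ψ (s * x - k)) = |s⁻¹| • ∫ y : ℝ, ψ (y - k) :=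
        Measure.integral_comp_mul_left (fun y => ψ (y - k)) s
      rw [h1, integral_sub_right_eq_self ψ k, hψint, smul_zero]
    have hsplit : (∫ x : ℝ, f x * ψ (s * x - k)) = ∫ x : ℝ, (f x - f t) * ψ (s * x - k) := by
      have h1 : (∫ x : ℝ, (f x - f t) * ψ (s * x - k)) =
          (∫ x : ℝ, f x * ψ (s * x - k)) - ∫ x : ℝ, f t * ψ (s * x - k) := by
        rw [← integral_sub hfg (hgint.const_mul (f t))]
        congr 1; funext x; ring
      rw [h1, integral_const_mul, hzero, mul_zero, sub_zero]
    have hptwise : ∀ x : ℝ, ‖(f x - f t) * ψ (s * x - k)‖ ≤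
        (B₀ * wj * Cψ) * (1 + (s * x - k) ^ 2)⁻¹ := by
      intro x
      have hu0 : (0:ℝ) ≤ |s * x - k| := abs_nonneg _
      have h1u : (0:ℝ) < 1 + |s * x - k| := by positivity
      have h1 : |f x - f t| ≤ B₀ * (1 + |s * x - k|) ^ a * wj := hkey2 x
      have h2 : |ψ (s * x - k)| ≤ Cψ * ((1 + |s * x - k|) ^ (a + 2))⁻¹ := by
        have h := hCψ (s * x - k)
        rwa [zpow_neg, zpow_natCast] at h
      have h3 : ‖(f x - f t) * ψ (s * x - k)‖ = |f x - f t| * |ψ (s * x - k)| := by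
        rw [Real.norm_eq_abs, abs_mul]
      rw [h3]
      have h4 : |f x - f t| * |ψ (s * x - k)| ≤
          (B₀ * (1 + |s * x - k|) ^ a * wj) * (Cψ * ((1 + |s * x - k|) ^ (a + 2))⁻¹) :=
        mul_le_mul h1 h2 (abs_nonneg _)
          (mul_nonneg (mul_nonneg hB₀0 (pow_nonneg (by positivity) a)) hwjpos.le)
      refine h4.trans ?_
      have h5 : (B₀ * (1 + |s * x - k|) ^ a * wj) * (Cψ * ((1 + |s * x - k|) ^ (a + 2))⁻¹) =
          (B₀ * wj * Cψ) * ((1 + |s * x - k|) ^ 2)⁻¹ := by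
        rw [pow_add, mul_inv]
        field_simp [h1u.ne']
      rw [h5]
      refine mul_le_mul_of_nonneg_left ?_
        (mul_nonneg (mul_nonneg hB₀0 hwjpos.le) hCψpos.le)
      refine inv_anti₀ (by positivity) ?_
      nlinarith [sq_abs (s * x - k), abs_nonneg (s * x - k)]
    have hnorm : |∫ x : ℝ, (f x - f t) * ψ (s * x - k)| ≤
        ∫ x : ℝ, (B₀ * wj * Cψ) * (1 + (s * x - k) ^ 2)⁻¹ := by
      rw [← Real.norm_eq_abs]
      exact norm_integral_le_of_norm_le (hdom.const_mul _) (ae_of_all _ hptwise)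
    have hval : (∫ x : ℝ, (B₀ * wj * Cψ) * (1 + (s * x - k) ^ 2)⁻¹) =
        (B₀ * wj * Cψ) * (s⁻¹ * Real.pi) := by
      rw [integral_const_mul]
      congr 1
      have h1 : (∫ x : ℝ, (1 + (s * x - k) ^ 2)⁻¹) = |s⁻¹| • ∫ y : ℝ, (1 + (y - k) ^ 2)⁻¹ :=
        Measure.integral_comp_mul_left (fun y => (1 + (y - k) ^ 2)⁻¹) s
      rw [h1, integral_sub_right_eq_self (fun y => (1 + y ^ 2)⁻¹) k, integral_univ_inv_one_add_sq,
        abs_of_pos (inv_pos.2 hspos), smul_eq_mul]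
    rw [hsplit, abs_mul, abs_of_pos hspos]
    calc s * |∫ x : ℝ, (f x - f t) * ψ (s * x - k)| ≤
        s * ((B₀ * wj * Cψ) * (s⁻¹ * Real.pi)) :=
          mul_le_mul_of_nonneg_left (hnorm.trans_eq hval) hspos.le
      _ = (s * s⁻¹) * (B₀ * Cψ * Real.pi * wj) := by ring
      _ = (B₀ * Cψ * Real.pi) * wj := by rw [mul_inv_cancel₀ hsne, one_mul]
  -- conclude
  have hle : Filter.limsup (fun j : ℕ => ENNReal.ofReal
      (|(2 : ℝ) ^ j * ∫ x : ℝ, f x * ψ ((2 : ℝ) ^ j * x - (⌊(2 : ℝ) ^ j * t⌋ : ℝ))| /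
        w ((2 : ℝ) ^ (-(j : ℤ))))) Filter.atTop ≤ ENNReal.ofReal (B₀ * Cψ * Real.pi) := by
    refine Filter.limsup_le_of_le (by isBoundedDefault) ?_
    refine Filter.Eventually.of_forall fun j => ?_
    refine ENNReal.ofReal_le_ofReal ?_
    rw [div_le_iff₀ (hpos j)]
    exact hkey j
  exact lt_of_le_of_lt hle ENNReal.ofReal_lt_top
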